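/- Let d ≥ 1, let μ ∈ ℝ^d, let σ ≥ 1, and let φ : ℝ^d → ℝ be the Gaussian density φ(x) = (2πσ²)^{-d/2} exp(-‖x-μ‖²/(2σ²)). Let Q be a probability measure on ℝ^d and let x̂ ∈ ℝ^d be such that ∫ ‖x - x̂‖ dQ(x) < ∞. Then |∫ φ(x) dQ(x) - φ(x̂)| ≤ (d/(√(2π)·σ)) · e^{-1/(2σ²)} · ∫ ‖x - x̂‖ dQ(x). -/

import Mathlib

open MeasureTheory

/-- 1D Lipschitz bound for the radial Gaussian profile. -/
lemma gaussian_radial_lipschitz (σ c : ℝ) (hσ : 1 ≤ σ) (hc : 0 ≤ c)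
    (a b : ℝ) :
    |c * Real.exp (-a ^ 2 / (2 * σ ^ 2)) - c * Real.exp (-b ^ 2 / (2 * σ ^ 2))| ≤
      (c * Real.exp (-1 / (2 * σ ^ 2))) * |a - b| := by
  have hσ0 : (0:ℝ) < σ := lt_of_lt_of_le one_pos hσ
  have hσ2 : (0:ℝ) < σ ^ 2 := by positivity
  have hσ2' : (1:ℝ) ≤ σ ^ 2 := by nlinarith
  set f : ℝ → ℝ := fun r => c * Real.exp (-r ^ 2 / (2 * σ ^ 2)) with hf
  set D : ℝ → ℝ := fun r => c * (Real.exp (-r ^ 2 / (2 * σ ^ 2)) * (-(2 * r) / (2 * σ ^ 2)))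
    with hD
  have hder : ∀ r : ℝ, HasDerivAt f (D r) r := by
    intro r
    have h1 : HasDerivAt (fun r : ℝ => -r ^ 2 / (2 * σ ^ 2)) (-(2 * r) / (2 * σ ^ 2)) r := by
      have h := ((hasDerivAt_pow 2 r).neg.div_const (2 * σ ^ 2))
      simpa using h
    exact h1.exp.const_mul c
  have key : ∀ t : ℝ, 0 ≤ t → t * Real.exp (-t ^ 2 / (2 * σ ^ 2)) ≤
      σ ^ 2 * Real.exp (-1 / (2 * σ ^ 2)) := by
    intro t ht
    have hE : (t ^ 2 - σ ^ 2) / (2 * σ ^ 2) + 1 ≤ Real.exp ((t ^ 2 - σ ^ 2) / (2 * σ ^ 2)) :=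
      Real.add_one_le_exp _
    have h1 : t ≤ σ * Real.exp ((t ^ 2 - σ ^ 2) / (2 * σ ^ 2)) := by
      have h2 : t ^ 2 + σ ^ 2 ≤ 2 * σ ^ 2 * Real.exp ((t ^ 2 - σ ^ 2) / (2 * σ ^ 2)) := by
        have h2' := mul_le_mul_of_nonneg_left hE
          (le_of_lt (by positivity : (0:ℝ) < 2 * σ ^ 2))
        have he : 2 * σ ^ 2 * ((t ^ 2 - σ ^ 2) / (2 * σ ^ 2) + 1) = t ^ 2 + σ ^ 2 := by
          field_simp; ring
        linarith [he ▸ h2']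
      nlinarith [sq_nonneg (t - σ)]
    have step1 : t * Real.exp (-t ^ 2 / (2 * σ ^ 2)) ≤ σ * Real.exp (-(1:ℝ)/2) := by
      have h3 := mul_le_mul_of_nonneg_right h1
        (le_of_lt (Real.exp_pos (-t ^ 2 / (2 * σ ^ 2))))
      have h4 : Real.exp ((t ^ 2 - σ ^ 2) / (2 * σ ^ 2)) * Real.exp (-t ^ 2 / (2 * σ ^ 2))
          = Real.exp (-(1:ℝ)/2) := by
        rw [← Real.exp_add]
        congr 1
        field_simp
        ring
      calc t * Real.exp (-t ^ 2 / (2 * σ ^ 2))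
          ≤ σ * Real.exp ((t ^ 2 - σ ^ 2) / (2 * σ ^ 2)) * Real.exp (-t ^ 2 / (2 * σ ^ 2)) := h3
        _ = σ * Real.exp (-(1:ℝ)/2) := by rw [mul_assoc, h4]
    have step2 : σ * Real.exp (-(1:ℝ)/2) ≤ σ ^ 2 * Real.exp (-1 / (2 * σ ^ 2)) := by
      have h5 : Real.exp (-(1:ℝ)/2) = Real.exp (-1 / (2 * σ ^ 2)) *
          Real.exp (-(1:ℝ)/2 + 1 / (2 * σ ^ 2)) := by
        rw [← Real.exp_add]; congr 1; ring
      have h6 : Real.exp (-(1:ℝ)/2 + 1 / (2 * σ ^ 2)) ≤ 1 := by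
        apply Real.exp_le_one_iff.mpr
        have : 1 / (2 * σ ^ 2) ≤ 1 / 2 := by
          apply one_div_le_one_div_of_le (by norm_num)
          nlinarith
        linarith
      have hexp := Real.exp_pos (-1 / (2 * σ ^ 2))
      calc σ * Real.exp (-(1:ℝ)/2)
          = σ * (Real.exp (-1 / (2 * σ ^ 2)) * Real.exp (-(1:ℝ)/2 + 1 / (2 * σ ^ 2))) := by
            rw [← h5]
        _ ≤ σ * (Real.exp (-1 / (2 * σ ^ 2)) * 1) := by
            apply mul_le_mul_of_nonneg_left _ hσ0.le
            exact mul_le_mul_of_nonneg_left h6 hexp.le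
        _ = σ * Real.exp (-1 / (2 * σ ^ 2)) := by ring
        _ ≤ σ ^ 2 * Real.exp (-1 / (2 * σ ^ 2)) := by
            nlinarith [mul_le_mul_of_nonneg_right (show σ ≤ σ ^ 2 by nlinarith) hexp.le]
    linarith
  have hDbound : ∀ r : ℝ, ‖D r‖ ≤ c * Real.exp (-1 / (2 * σ ^ 2)) := by
    intro r
    have hrsq : (-|r| ^ 2 : ℝ) = -r ^ 2 := by rw [sq_abs]
    have hk := key |r| (abs_nonneg r)
    rw [hrsq] at hk
    have hexp := Real.exp_pos (-r ^ 2 / (2 * σ ^ 2))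
    have : ‖D r‖ = c * Real.exp (-r ^ 2 / (2 * σ ^ 2)) * |r| / σ ^ 2 := by
      simp only [hD, Real.norm_eq_abs, abs_mul, abs_div, abs_neg, abs_two,
        abs_of_nonneg hc, abs_of_nonneg hexp.le, abs_of_pos hσ2]
      field_simp
    rw [this]
    rw [div_le_iff₀ hσ2]
    calc c * Real.exp (-r ^ 2 / (2 * σ ^ 2)) * |r|
        = c * (|r| * Real.exp (-r ^ 2 / (2 * σ ^ 2))) := by ring
      _ ≤ c * (σ ^ 2 * Real.exp (-1 / (2 * σ ^ 2))) := mul_le_mul_of_nonneg_left hk hc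
      _ = c * Real.exp (-1 / (2 * σ ^ 2)) * σ ^ 2 := by ring
  have := Convex.norm_image_sub_le_of_norm_hasDerivWithin_le (f := f) (f' := D)
    (fun x _ => (hder x).hasDerivWithinAt) (fun x _ => hDbound x) convex_univ
    (Set.mem_univ b) (Set.mem_univ a)
  simpa [Real.norm_eq_abs] using this

/-- Theorem 3.1 of the paper (quantitative form): for the Gaussian density φ with mean μ
and covariance σ²I (σ ≥ 1), and Q a probability measure with finite first moment around xhat,
the expectation of φ under Q differs from φ(xhat) by at most
(d/(√(2π)σ)) e^{-1/(2σ²)} times the first moment. -/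
theorem gaussian_expectation_close_to_point_value
    (d : ℕ) (hd : 1 ≤ d) (μ : EuclideanSpace ℝ (Fin d)) (σ : ℝ) (hσ : 1 ≤ σ)
    (φ : EuclideanSpace ℝ (Fin d) → ℝ)
    (hφ : ∀ x, φ x = (2 * Real.pi * σ ^ 2) ^ (-(d : ℝ) / 2) *
      Real.exp (-‖x - μ‖ ^ 2 / (2 * σ ^ 2)))
    (Q : Measure (EuclideanSpace ℝ (Fin d))) [IsProbabilityMeasure Q]
    (xhat : EuclideanSpace ℝ (Fin d))
    (hmom : Integrable (fun x => ‖x - xhat‖) Q) :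
    |(∫ x, φ x ∂Q) - φ xhat| ≤
      (d / (Real.sqrt (2 * Real.pi) * σ)) * Real.exp (-1 / (2 * σ ^ 2)) *
        ∫ x, ‖x - xhat‖ ∂Q := by
  have hσ0 : (0:ℝ) < σ := lt_of_lt_of_le one_pos hσ
  have hπ := Real.pi_gt_three
  set c : ℝ := (2 * Real.pi * σ ^ 2) ^ (-(d : ℝ) / 2) with hcdef
  have hc0 : 0 < c := by
    apply Real.rpow_pos_of_pos; positivity
  set L : ℝ := (d / (Real.sqrt (2 * Real.pi) * σ)) * Real.exp (-1 / (2 * σ ^ 2)) with hLdef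
  have hd1 : (1:ℝ) ≤ (d:ℝ) := by exact_mod_cast hd
  -- bound on c
  have hcL : c ≤ (d:ℝ) / (Real.sqrt (2 * Real.pi) * σ) := by
    have h1 : (1:ℝ) ≤ 2 * Real.pi * σ ^ 2 := by nlinarith
    have h2 : c ≤ (2 * Real.pi * σ ^ 2) ^ (-(1:ℝ)/2) :=
      Real.rpow_le_rpow_of_exponent_le h1 (by linarith)
    have h3 : (2 * Real.pi * σ ^ 2) ^ (-(1:ℝ)/2) = 1 / (Real.sqrt (2 * Real.pi) * σ) := by
      rw [show (-(1:ℝ)/2) = -(1/2 : ℝ) by norm_num, Real.rpow_neg (by positivity),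
        ← Real.sqrt_eq_rpow, Real.sqrt_mul (by positivity) (σ ^ 2), Real.sqrt_sq hσ0.le,
        one_div]
    have h4 : 1 / (Real.sqrt (2 * Real.pi) * σ) ≤ (d:ℝ) / (Real.sqrt (2 * Real.pi) * σ) := by
      exact div_le_div_of_nonneg_right hd1 (by positivity)
    linarith [h3 ▸ h2]
  have hLpos : 0 < L := by
    apply mul_pos _ (Real.exp_pos _)
    apply div_pos (by linarith) (by positivity)
  -- pointwise Lipschitz bound
  have hpt : ∀ x : EuclideanSpace ℝ (Fin d), |φ x - φ xhat| ≤ L * ‖x - xhat‖ := by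
    intro x
    rw [hφ x, hφ xhat]
    have h5 := gaussian_radial_lipschitz σ c hσ hc0.le ‖x - μ‖ ‖xhat - μ‖
    have h6 : |‖x - μ‖ - ‖xhat - μ‖| ≤ ‖x - xhat‖ := by
      have := abs_norm_sub_norm_le (x - μ) (xhat - μ)
      have heq : x - μ - (xhat - μ) = x - xhat := by abel
      rwa [heq] at this
    calc |c * Real.exp (-‖x - μ‖ ^ 2 / (2 * σ ^ 2)) -
          c * Real.exp (-‖xhat - μ‖ ^ 2 / (2 * σ ^ 2))|
        ≤ (c * Real.exp (-1 / (2 * σ ^ 2))) * |‖x - μ‖ - ‖xhat - μ‖| := h5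
      _ ≤ L * ‖x - xhat‖ := by
          apply mul_le_mul _ h6 (abs_nonneg _) hLpos.le
          exact mul_le_mul_of_nonneg_right hcL (Real.exp_pos _).le
  -- integrability of φ
  have hφeq : φ = fun x => c * Real.exp (-‖x - μ‖ ^ 2 / (2 * σ ^ 2)) := funext hφ
  have hcont : Continuous φ := by rw [hφeq]; fun_prop
  have hφbd : ∀ x, ‖φ x‖ ≤ c := by
    intro x
    rw [hφ x, Real.norm_eq_abs, abs_mul, abs_of_nonneg hc0.le,
      abs_of_nonneg (Real.exp_pos _).le]
    have : Real.exp (-‖x - μ‖ ^ 2 / (2 * σ ^ 2)) ≤ 1 := by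
      apply Real.exp_le_one_iff.mpr
      have h7 : (0:ℝ) ≤ ‖x - μ‖ ^ 2 / (2 * σ ^ 2) := by positivity
      rw [neg_div]
      linarith
    nlinarith
  have hφint : Integrable φ Q :=
    Integrable.mono' (integrable_const c) hcont.aestronglyMeasurable (ae_of_all _ hφbd)
  -- conclusion
  have hsub : Integrable (fun x => φ x - φ xhat) Q := hφint.sub (integrable_const _)
  have hint : (∫ x, φ x ∂Q) - φ xhat = ∫ x, (φ x - φ xhat) ∂Q := by
    rw [integral_sub hφint (integrable_const _), integral_const, probReal_univ,
      one_smul]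
  rw [hint]
  calc |∫ x, (φ x - φ xhat) ∂Q| ≤ ∫ x, |φ x - φ xhat| ∂Q := by
        simpa [Real.norm_eq_abs] using norm_integral_le_integral_norm (fun x => φ x - φ xhat) (μ := Q)
    _ ≤ ∫ x, L * ‖x - xhat‖ ∂Q := integral_mono hsub.abs (hmom.const_mul L) hpt
    _ = L * ∫ x, ‖x - xhat‖ ∂Q := integral_const_mul L _
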